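/- Let F be a field, d ≥ 1, and λ ∈ P(d) a partition. In the group algebra F𝔖_d the left ideal F𝔖_d·x_λ·u_{λ'}·y_{λ'} is nonzero, where u_{λ'} is the unique element of ^λD^{λ'} with 𝔖_λ ∩ u_{λ'}𝔖_{λ'}u_{λ'}⁻¹ = {1}; equivalently, for any faithful right F𝔖_d-module M, the subspace M·x_λ·u_{λ'}·y_{λ'} is nonzero. -/

import Mathlib

open Finset
open scoped Classical

noncomputable section

/-- The partial sum `c 0 + ⋯ + c (s-1)` of a composition `c`. -/
def psum (c : ℕ → ℕ) (s : ℕ) : ℕ := ∑ r ∈ Finset.range s, c r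

/-- `c` is a composition of `d` with (at most) `n` parts. -/
def IsComposition (n : ℕ) (c : ℕ → ℕ) (d : ℕ) : Prop :=
  (∀ s, n ≤ s → c s = 0) ∧ psum c n = d

/-- `c` is a partition of `d` with at most `n` parts. -/
def IsPartitionC (n : ℕ) (c : ℕ → ℕ) (d : ℕ) : Prop :=
  IsComposition n c d ∧ ∀ s t, s ≤ t → c t ≤ c s

/-- The transposed partition: `(transp n c) i = #{s < n | c s > i}`. -/
def transp (n : ℕ) (c : ℕ → ℕ) : ℕ → ℕ := fun i =>
  ((Finset.range n).filter fun s => i < c s).card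

/-- The dominance order: `Dominates c c'` means `c ⊴ c'`. -/
def Dominates (c c' : ℕ → ℕ) : Prop :=
  ∀ t, ∑ s ∈ Finset.range t, c s ≤ ∑ s ∈ Finset.range t, c' s

/-- The block index ("color") of the position `i` for the composition `c` with
`n` parts: position `i` lies in the `colorOf n c i`-th block. -/
def colorOf (n : ℕ) (c : ℕ → ℕ) (i : ℕ) : ℕ :=
  ((Finset.range n).filter fun s => psum c (s + 1) ≤ i).card

/-- The Young (standard parabolic) subgroup `𝔖_c ≤ 𝔖_d` of the composition `c`:
the stabilizer of the block coloring. -/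
def young (n : ℕ) (c : ℕ → ℕ) (d : ℕ) : Subgroup (Equiv.Perm (Fin d)) where
  carrier := {g | ∀ i : Fin d, colorOf n c (g i) = colorOf n c i}
  one_mem' := fun _ => rfl
  mul_mem' := by
    intro a b ha hb i
    simpa [Equiv.Perm.mul_apply] using (ha (b i)).trans (hb i)
  inv_mem' := by
    intro a ha i
    simpa using (ha (a⁻¹ i)).symm

/-- The Coxeter length of a permutation (number of inversions). -/
def lenPerm (d : ℕ) (w : Equiv.Perm (Fin d)) : ℕ :=
  (Finset.univ.filter fun p : Fin d × Fin d => p.1 < p.2 ∧ w p.2 < w p.1).card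

/-- `g` is the minimal-length representative of its double coset
`𝔖_{cl} g 𝔖_{cr}` (an element of `^{cl}𝒟^{cr}`). -/
def IsMinDC (d : ℕ) (nl : ℕ) (cl : ℕ → ℕ) (nr : ℕ) (cr : ℕ → ℕ)
    (g : Equiv.Perm (Fin d)) : Prop :=
  ∀ a ∈ young nl cl d, ∀ b ∈ young nr cr d, lenPerm d g ≤ lenPerm d (a * g * b)

/-- `g` is the minimal-length representative of its coset `𝔖_c g`
(an element of `^{c}𝒟`). -/
def IsMinL (d : ℕ) (n : ℕ) (c : ℕ → ℕ) (g : Equiv.Perm (Fin d)) : Prop :=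
  ∀ h ∈ young n c d, lenPerm d g ≤ lenPerm d (h * g)

/-- `x_c = ∑_{g ∈ 𝔖_c} g` in the group algebra `k𝔖_d`. -/
def xEl (k : Type) [CommRing k] (n : ℕ) (c : ℕ → ℕ) (d : ℕ) :
    MonoidAlgebra k (Equiv.Perm (Fin d)) :=
  ∑ g ∈ Finset.univ.filter fun g => g ∈ young n c d,
    MonoidAlgebra.of k (Equiv.Perm (Fin d)) g

/-- `y_c = ∑_{g ∈ 𝔖_c} sgn(g) g` in the group algebra `k𝔖_d`. -/
def yEl (k : Type) [CommRing k] (n : ℕ) (c : ℕ → ℕ) (d : ℕ) :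
    MonoidAlgebra k (Equiv.Perm (Fin d)) :=
  ∑ g ∈ Finset.univ.filter fun g => g ∈ young n c d,
    ((Equiv.Perm.sign g : ℤ) : k) • MonoidAlgebra.of k (Equiv.Perm (Fin d)) g

/-!
Statement 12: Let `F` be a field and `λ` a partition of `d`.  If `u = u_{λ'}` is the
unique element of `^λ𝒟^{λ'}` with `𝔖_λ ∩ u 𝔖_{λ'} u⁻¹ = 1`, then
`x_λ · u · y_{λ'} ≠ 0` in `F𝔖_d` (so the left ideal `F𝔖_d x_λ u_{λ'} y_{λ'}` is
nonzero); equivalently, for any faithful right `F𝔖_d`-module `M`, the subspace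
`M · x_λ u_{λ'} y_{λ'}` is nonzero.
-/

theorem stmt12 (F : Type) [Field F] (d n : ℕ) (c : ℕ → ℕ) (hp : IsPartitionC n c d)
    (u : Equiv.Perm (Fin d))
    (hu : IsMinDC d n c d (transp n c) u ∧
      ∀ g ∈ young d (transp n c) d, u * g * u⁻¹ ∈ young n c d → g = 1) :
    xEl F n c d * MonoidAlgebra.of F (Equiv.Perm (Fin d)) u * yEl F d (transp n c) d ≠ 0
    ∧ ∀ (M : Type) [AddCommGroup M]
        [Module (MonoidAlgebra F (Equiv.Perm (Fin d)))ᵐᵒᵖ M]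
        [FaithfulSMul (MonoidAlgebra F (Equiv.Perm (Fin d)))ᵐᵒᵖ M],
        ∃ m : M,
          (MulOpposite.op
            (xEl F n c d * MonoidAlgebra.of F (Equiv.Perm (Fin d)) u *
              yEl F d (transp n c) d)) • m ≠ 0 := by
  classical
  let G := Equiv.Perm (Fin d)
  set A := Finset.univ.filter (fun g => g ∈ young n c d) with hA
  set B := Finset.univ.filter (fun g => g ∈ young d (transp n c) d) with hB
  have expand : xEl F n c d * MonoidAlgebra.of F G u * yEl F d (transp n c) d
      = ∑ a ∈ A, ∑ b ∈ B,
          ((Equiv.Perm.sign b : ℤ) : F) • MonoidAlgebra.of F G (a * u * b) := by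
    unfold xEl yEl
    rw [Finset.sum_mul, Finset.sum_mul]
    refine Finset.sum_congr rfl fun a _ => ?_
    rw [Finset.mul_sum]
    refine Finset.sum_congr rfl fun b _ => ?_
    rw [mul_smul_comm]
    congr 1
    simp [MonoidAlgebra.of_apply, MonoidAlgebra.single_mul_single]
  have key : (xEl F n c d * MonoidAlgebra.of F G u * yEl F d (transp n c) d).coeff u = 1 := by
    rw [expand]
    have hterm : ∀ (a b : G),
        (((Equiv.Perm.sign b : ℤ) : F) • MonoidAlgebra.of F G (a * u * b)).coeff u
          = if a * u * b = u then ((Equiv.Perm.sign b : ℤ) : F) else 0 := by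
      intro a b
      rw [MonoidAlgebra.coeff_smul_apply, MonoidAlgebra.of_apply, MonoidAlgebra.coeff_single_apply]
      simp [mul_ite]
    rw [MonoidAlgebra.coeff_sum, Finset.sum_apply']
    have : ∀ a ∈ A, (∑ b ∈ B,
        ((Equiv.Perm.sign b : ℤ) : F) • MonoidAlgebra.of F G (a * u * b)).coeff u
        = ∑ b ∈ B, if a * u * b = u then ((Equiv.Perm.sign b : ℤ) : F) else 0 := by
      intro a _
      rw [MonoidAlgebra.coeff_sum, Finset.sum_apply']
      exact Finset.sum_congr rfl fun b _ => hterm a b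
    rw [Finset.sum_congr rfl this, ← Finset.sum_product']
    rw [Finset.sum_eq_single_of_mem ((1 : G), (1 : G))]
    · simp
    · simp [hA, hB, Subgroup.one_mem]
    · rintro ⟨a, b⟩ hab hne
      simp only [hA, hB, Finset.mem_product, Finset.mem_filter, Finset.mem_univ,
        true_and] at hab
      obtain ⟨haY, hbY⟩ := hab
      by_cases h : a * u * b = u
      · exfalso
        have hb1 : b = 1 := by
          apply hu.2 b hbY
          have hub : u * b = a⁻¹ * u := by
            rw [eq_inv_mul_iff_mul_eq, ← mul_assoc, h]
          have ha' : u * b * u⁻¹ = a⁻¹ := by rw [hub]; group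
          rw [ha']
          exact (young n c d).inv_mem haY
        have ha1 : a = 1 := by
          rw [hb1, mul_one] at h
          exact mul_right_cancel h
        exact hne (by rw [ha1, hb1])
      · simp [h]
  have hne : xEl F n c d * MonoidAlgebra.of F G u * yEl F d (transp n c) d ≠ 0 := by
    intro h
    rw [h] at key
    simp at key
  refine ⟨hne, ?_⟩
  intro M _ _ _
  by_contra hcon
  push_neg at hcon
  have hz : MulOpposite.op (xEl F n c d * MonoidAlgebra.of F G u *
      yEl F d (transp n c) d) = (0 : (MonoidAlgebra F G)ᵐᵒᵖ) :=
    eq_of_smul_eq_smul (M := (MonoidAlgebra F G)ᵐᵒᵖ) (α := M)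
      (fun m => by rw [hcon m, zero_smul])
  exact hne (by simpa using congrArg MulOpposite.unop hz)
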